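/- Let p ∈ (1, ∞) and, for a ≥ 0, let φ_a(t) = ∫_0^t (a + s)^{p−2} s ds, so that φ_a'(t) = (a + t)^{p−2} t. For every real δ > 0 there exists a constant c(δ) > 0, depending only on p and δ, such that for all a ≥ 0 and all s, t ≥ 0: φ_a'(s) t + φ_a'(t) s ≤ δ φ_a(s) + c(δ) φ_a(t). -/

import Mathlib

/-- The integrand `(a+s)^{p-2} s` of the shifted N-function is monotone. -/
lemma shiftedN_g_mono {p : ℝ} (hp : 1 < p) {a s t : ℝ} (ha : 0 ≤ a) (hs : 0 ≤ s) (hst : s ≤ t) :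
    (a + s) ^ (p - 2) * s ≤ (a + t) ^ (p - 2) * t := by
  rcases hs.eq_or_lt with rfl | hs0
  · simp
    positivity
  · have ht0 : 0 < t := lt_of_lt_of_le hs0 hst
    have h1 : 0 < a + s := by linarith
    have h2 : 0 < a + t := by linarith
    have e : ∀ x : ℝ, 0 < a + x → (a + x) ^ (p - 2) * x = (a + x) ^ (p - 1) * (x / (a + x)) := by
      intro x hx
      rw [show p - 2 = (p - 1) - 1 by ring, Real.rpow_sub_one hx.ne']
      field_simp
    rw [e s h1, e t h2]
    apply mul_le_mul
    · exact Real.rpow_le_rpow h1.le (by linarith) (by linarith)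
    · rw [div_le_div_iff₀ h1 h2]; nlinarith
    · positivity
    · positivity

lemma shiftedN_gA {p : ℝ} (hp : 1 < p) {a s θ : ℝ} (ha : 0 ≤ a) (hs : 0 < s)
    (hθ0 : 0 < θ) (hθ1 : θ ≤ 1) :
    (a + θ * s) ^ (p - 2) * (θ * s) ≤ θ ^ (min (p - 1) 1) * ((a + s) ^ (p - 2) * s) := by
  rcases le_total 2 p with h2 | h2
  · have hb : (a + θ * s) ^ (p - 2) ≤ (a + s) ^ (p - 2) :=
      Real.rpow_le_rpow (by positivity) (by nlinarith) (by linarith)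
    have hθr : θ ≤ θ ^ (min (p - 1) 1) := by
      calc θ = θ ^ (1 : ℝ) := (Real.rpow_one θ).symm
        _ ≤ θ ^ (min (p - 1) 1) :=
          Real.rpow_le_rpow_of_exponent_ge hθ0 hθ1 (min_le_right _ _)
    calc (a + θ * s) ^ (p - 2) * (θ * s) ≤ (a + s) ^ (p - 2) * (θ * s) :=
          mul_le_mul_of_nonneg_right hb (by positivity)
      _ = θ * ((a + s) ^ (p - 2) * s) := by ring
      _ ≤ θ ^ (min (p - 1) 1) * ((a + s) ^ (p - 2) * s) :=
          mul_le_mul_of_nonneg_right hθr (by positivity)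
  · have hmin : min (p - 1) 1 = p - 1 := min_eq_left (by linarith)
    have hb : (a + θ * s) ^ (p - 2) ≤ (θ * (a + s)) ^ (p - 2) :=
      Real.rpow_le_rpow_of_nonpos (by positivity) (by nlinarith) (by linarith)
    have he : (θ * (a + s)) ^ (p - 2) = θ ^ (p - 2) * (a + s) ^ (p - 2) :=
      Real.mul_rpow hθ0.le (by positivity)
    have hpw : θ ^ (p - 2) * θ = θ ^ (p - 1) := by
      rw [show p - 1 = (p - 2) + 1 by ring, Real.rpow_add hθ0, Real.rpow_one]
    calc (a + θ * s) ^ (p - 2) * (θ * s) ≤ (θ * (a + s)) ^ (p - 2) * (θ * s) :=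
          mul_le_mul_of_nonneg_right hb (by positivity)
      _ = (θ ^ (p - 2) * θ) * ((a + s) ^ (p - 2) * s) := by rw [he]; ring
      _ = θ ^ (min (p - 1) 1) * ((a + s) ^ (p - 2) * s) := by rw [hpw, hmin]

lemma shiftedN_gB {p : ℝ} (hp : 1 < p) {a s t θ : ℝ} (ha : 0 ≤ a) (ht : 0 < t) (hts : t ≤ s)
    (hθ0 : 0 < θ) (hθ1 : θ ≤ 1) (h : θ * s ≤ t) :
    (a + s) ^ (p - 2) * s ≤ θ ^ (-(max (p - 1) 1)) * ((a + t) ^ (p - 2) * t) := by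
  have hs0 : 0 < s := lt_of_lt_of_le ht hts
  have hstθ : s ≤ t / θ := (le_div_iff₀ hθ0).mpr (by linarith [h])
  rcases le_total 2 p with h2 | h2
  · have hq : max (p - 1) 1 = p - 1 := max_eq_left (by linarith)
    have hb : (a + s) ^ (p - 2) ≤ ((a + t) / θ) ^ (p - 2) := by
      apply Real.rpow_le_rpow (by positivity) _ (by linarith)
      rw [le_div_iff₀ hθ0]
      nlinarith
    have he : ((a + t) / θ) ^ (p - 2) = (a + t) ^ (p - 2) * θ ^ (-(p - 2)) := by
      rw [Real.div_rpow (by positivity) hθ0.le, Real.rpow_neg hθ0.le, div_eq_mul_inv]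
    have hpw : θ ^ (-(p - 2)) * θ⁻¹ = θ ^ (-(p - 1)) := by
      rw [show (-(p - 1)) = (-(p - 2)) + (-1) by ring, Real.rpow_add hθ0, Real.rpow_neg_one]
    calc (a + s) ^ (p - 2) * s ≤ ((a + t) / θ) ^ (p - 2) * (t / θ) :=
          mul_le_mul hb hstθ hs0.le (by positivity)
      _ = (θ ^ (-(p - 2)) * θ⁻¹) * ((a + t) ^ (p - 2) * t) := by
          rw [he]; field_simp
      _ = θ ^ (-(max (p - 1) 1)) * ((a + t) ^ (p - 2) * t) := by rw [hpw, hq]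
  · have hq : max (p - 1) 1 = 1 := max_eq_right (by linarith)
    have hb : (a + s) ^ (p - 2) ≤ (a + t) ^ (p - 2) :=
      Real.rpow_le_rpow_of_nonpos (by positivity) (by linarith) (by linarith)
    calc (a + s) ^ (p - 2) * s ≤ (a + t) ^ (p - 2) * (t / θ) :=
          mul_le_mul hb hstθ hs0.le (by positivity)
      _ = θ ^ (-(1:ℝ)) * ((a + t) ^ (p - 2) * t) := by
          rw [Real.rpow_neg_one]; field_simp
      _ = θ ^ (-(max (p - 1) 1)) * ((a + t) ^ (p - 2) * t) := by rw [hq]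

/-- The shifted N-function `φ_a(t) = ∫₀ᵗ (a + s)^{p-2} s ds`. -/
noncomputable def phiShift (p a t : ℝ) : ℝ :=
  ∫ s in (0:ℝ)..t, (a + s) ^ (p - 2) * s

lemma phiShift_lower {p : ℝ} (hp : 1 < p) {a t : ℝ} (ha : 0 ≤ a) (ht : 0 ≤ t) :
    (a + t) ^ (p - 2) * t ^ 2 ≤ (4 * 2 ^ (max (p - 2) 0)) * phiShift p a t := by
  rcases ht.eq_or_lt with rfl | ht0
  · simp [phiShift]
  · set g : ℝ → ℝ := fun s => (a + s) ^ (p - 2) * s with hg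
    have hmono : MonotoneOn g (Set.Icc 0 t) := fun x hx y hy hxy => shiftedN_g_mono hp ha hx.1 hxy
    have hsub1 : Set.uIcc (0:ℝ) (t/2) ⊆ Set.Icc 0 t := by
      rw [Set.uIcc_of_le (by linarith)]
      exact Set.Icc_subset_Icc le_rfl (by linarith)
    have hsub2 : Set.uIcc (t/2) t ⊆ Set.Icc 0 t := by
      rw [Set.uIcc_of_le (by linarith)]
      exact Set.Icc_subset_Icc (by linarith) le_rfl
    have int1 : IntervalIntegrable g MeasureTheory.volume 0 (t/2) :=
      (hmono.mono hsub1).intervalIntegrable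
    have int2 : IntervalIntegrable g MeasureTheory.volume (t/2) t :=
      (hmono.mono hsub2).intervalIntegrable
    have hsplit : phiShift p a t = (∫ s in (0:ℝ)..(t/2), g s) + ∫ s in (t/2)..t, g s :=
      (intervalIntegral.integral_add_adjacent_intervals int1 int2).symm
    have h1 : 0 ≤ ∫ s in (0:ℝ)..(t/2), g s := by
      apply intervalIntegral.integral_nonneg (by linarith)
      intro u hu
      have : 0 ≤ u := hu.1
      positivity
    have h2 : (t - t/2) * g (t/2) ≤ ∫ s in (t/2)..t, g s := by
      have hc := intervalIntegral.integral_mono_on (by linarith : t/2 ≤ t)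
        (intervalIntegrable_const (c := g (t/2))) int2
        (fun x hx => hmono ⟨by linarith, by linarith⟩
          ⟨by linarith [hx.1], hx.2⟩ hx.1)
      rwa [intervalIntegral.integral_const, smul_eq_mul] at hc
    have hphi : (t/2) * g (t/2) ≤ phiShift p a t := by
      rw [hsplit]
      have : t - t/2 = t/2 := by ring
      rw [this] at h2
      linarith
    have hcomp : (a + t) ^ (p - 2) ≤ 2 ^ (max (p - 2) 0) * (a + t/2) ^ (p - 2) := by
      rcases le_total p 2 with h2' | h2'
      · have hm : max (p - 2) 0 = 0 := max_eq_right (by linarith)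
        rw [hm, Real.rpow_zero, one_mul]
        exact Real.rpow_le_rpow_of_nonpos (by positivity) (by linarith) (by linarith)
      · have hm : max (p - 2) 0 = p - 2 := max_eq_left (by linarith)
        rw [hm]
        calc (a + t) ^ (p - 2) ≤ (2 * (a + t/2)) ^ (p - 2) :=
              Real.rpow_le_rpow (by positivity) (by linarith) (by linarith)
          _ = 2 ^ (p - 2) * (a + t/2) ^ (p - 2) :=
              Real.mul_rpow (by norm_num) (by positivity)
    have hgt2 : g (t/2) = (a + t/2) ^ (p - 2) * (t/2) := rfl
    have key : (a + t) ^ (p - 2) * t ^ 2 ≤ (4 * 2 ^ (max (p - 2) 0)) * ((t/2) * g (t/2)) := by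
      rw [hgt2]
      have ht2 : (0:ℝ) ≤ t ^ 2 := sq_nonneg t
      have h2m : (0:ℝ) < 2 ^ (max (p - 2) 0) := Real.rpow_pos_of_pos (by norm_num) _
      nlinarith [mul_le_mul_of_nonneg_right hcomp ht2,
        Real.rpow_nonneg (by positivity : (0:ℝ) ≤ a + t/2) (p-2)]
    calc (a + t) ^ (p - 2) * t ^ 2 ≤ (4 * 2 ^ (max (p - 2) 0)) * ((t/2) * g (t/2)) := key
      _ ≤ (4 * 2 ^ (max (p - 2) 0)) * phiShift p a t := by
          apply mul_le_mul_of_nonneg_left hphi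
          positivity

set_option maxHeartbeats 1000000 in
/-- Generalized Young inequality for shifted N-functions:
`φ_a'(s) t + φ_a'(t) s ≤ δ φ_a(s) + c(δ) φ_a(t)`, where `φ_a'(t) = (a+t)^{p-2} t`. -/
theorem shifted_N_function_generalized_Young (p : ℝ) (hp1 : 1 < p)
    (δ : ℝ) (hδ : 0 < δ) :
    ∃ c : ℝ, 0 < c ∧
      ∀ a s t : ℝ, 0 ≤ a → 0 ≤ s → 0 ≤ t →
        (a + s) ^ (p - 2) * s * t + (a + t) ^ (p - 2) * t * s ≤
          δ * phiShift p a s + c * phiShift p a t := by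
  set r : ℝ := min (p - 1) 1 with hr
  set q : ℝ := max (p - 1) 1 with hq
  set K : ℝ := 4 * 2 ^ (max (p - 2) 0) with hK
  have hr0 : 0 < r := lt_min (by linarith) one_pos
  have hr1 : r ≤ 1 := min_le_right _ _
  have hq1 : 1 ≤ q := le_max_right _ _
  have hKpos : 0 < K := by
    have : (0:ℝ) < 2 ^ (max (p - 2) 0) := Real.rpow_pos_of_pos (by norm_num) _
    positivity
  set θ : ℝ := min 1 ((δ / (2 * K)) ^ (1 / r)) with hθ
  have hx : (0:ℝ) < δ / (2 * K) := by positivity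
  have hθ0 : 0 < θ := lt_min one_pos (Real.rpow_pos_of_pos hx _)
  have hθ1 : θ ≤ 1 := min_le_left _ _
  have hθr : θ ^ r ≤ δ / (2 * K) := by
    calc θ ^ r ≤ ((δ / (2 * K)) ^ (1 / r)) ^ r :=
          Real.rpow_le_rpow hθ0.le (min_le_right _ _) hr0.le
      _ = (δ / (2 * K)) ^ ((1 / r) * r) := (Real.rpow_mul hx.le _ _).symm
      _ = δ / (2 * K) := by
          rw [one_div_mul_cancel hr0.ne', Real.rpow_one]
  refine ⟨2 * θ ^ (-q) * K, by positivity, fun a s t ha hs ht => ?_⟩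
  have hθq0 : 0 < θ ^ (-q) := Real.rpow_pos_of_pos hθ0 _
  have hθq1 : 1 ≤ θ ^ (-q) := by
    calc (1:ℝ) = θ ^ (0:ℝ) := (Real.rpow_zero θ).symm
      _ ≤ θ ^ (-q) := Real.rpow_le_rpow_of_exponent_ge hθ0 hθ1 (by linarith)
  have hGs : 0 ≤ (a + s) ^ (p - 2) * s := by positivity
  have hGt : 0 ≤ (a + t) ^ (p - 2) * t := by positivity
  have hθrθ : θ ≤ θ ^ r := by
    calc θ = θ ^ (1:ℝ) := (Real.rpow_one θ).symm
      _ ≤ θ ^ r := Real.rpow_le_rpow_of_exponent_ge hθ0 hθ1 hr1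
  have hθrnn : 0 ≤ θ ^ r := Real.rpow_nonneg hθ0.le _
  -- Core inequality
  have core : (a + s) ^ (p - 2) * s * t + (a + t) ^ (p - 2) * t * s ≤
      2 * θ ^ r * ((a + s) ^ (p - 2) * s * s) + 2 * θ ^ (-q) * ((a + t) ^ (p - 2) * t * t) := by
    rcases le_total s t with hst | hts
    · have h1 : (a + s) ^ (p - 2) * s * t ≤ (a + t) ^ (p - 2) * t * t :=
        mul_le_mul_of_nonneg_right (shiftedN_g_mono hp1 ha hs hst) ht
      have h2 : (a + t) ^ (p - 2) * t * s ≤ (a + t) ^ (p - 2) * t * t :=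
        mul_le_mul_of_nonneg_left hst hGt
      nlinarith [mul_nonneg hGs hs, mul_nonneg hGt ht]
    · rcases le_total t (θ * s) with hc | hc
      · rcases hs.eq_or_lt with rfl | hs0
        · have ht0 : t = 0 := le_antisymm (by simpa using hc) ht
          subst ht0
          simp
        · have h1 : (a + s) ^ (p - 2) * s * t ≤ θ * ((a + s) ^ (p - 2) * s * s) := by
            calc (a + s) ^ (p - 2) * s * t ≤ (a + s) ^ (p - 2) * s * (θ * s) :=
                  mul_le_mul_of_nonneg_left hc hGs
              _ = θ * ((a + s) ^ (p - 2) * s * s) := by ring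
          have h2 : (a + t) ^ (p - 2) * t ≤ θ ^ r * ((a + s) ^ (p - 2) * s) := by
            calc (a + t) ^ (p - 2) * t ≤ (a + θ * s) ^ (p - 2) * (θ * s) :=
                  shiftedN_g_mono hp1 ha ht hc
              _ ≤ θ ^ r * ((a + s) ^ (p - 2) * s) := shiftedN_gA hp1 ha hs0 hθ0 hθ1
          have h3 : (a + t) ^ (p - 2) * t * s ≤ θ ^ r * ((a + s) ^ (p - 2) * s * s) := by
            calc (a + t) ^ (p - 2) * t * s ≤ θ ^ r * ((a + s) ^ (p - 2) * s) * s :=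
                  mul_le_mul_of_nonneg_right h2 hs
              _ = θ ^ r * ((a + s) ^ (p - 2) * s * s) := by ring
          nlinarith [mul_nonneg hGs hs, mul_nonneg hGt ht]
      · rcases ht.eq_or_lt with rfl | ht0
        · have hs0 : s = 0 := by nlinarith
          subst hs0
          simp
        · have hB : (a + s) ^ (p - 2) * s ≤ θ ^ (-q) * ((a + t) ^ (p - 2) * t) :=
            shiftedN_gB hp1 ha ht0 hts hθ0 hθ1 hc
          have h1 : (a + s) ^ (p - 2) * s * t ≤ θ ^ (-q) * ((a + t) ^ (p - 2) * t * t) := by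
            calc (a + s) ^ (p - 2) * s * t ≤ θ ^ (-q) * ((a + t) ^ (p - 2) * t) * t :=
                  mul_le_mul_of_nonneg_right hB ht
              _ = θ ^ (-q) * ((a + t) ^ (p - 2) * t * t) := by ring
          have hstθ : s ≤ θ⁻¹ * t := by
            rw [← div_eq_inv_mul, le_div_iff₀ hθ0]
            linarith [hc]
          have hθinv : θ⁻¹ ≤ θ ^ (-q) := by
            calc θ⁻¹ = θ ^ (-(1:ℝ)) := (Real.rpow_neg_one θ).symm
              _ ≤ θ ^ (-q) := Real.rpow_le_rpow_of_exponent_ge hθ0 hθ1 (by linarith)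
          have h2 : (a + t) ^ (p - 2) * t * s ≤ θ ^ (-q) * ((a + t) ^ (p - 2) * t * t) := by
            calc (a + t) ^ (p - 2) * t * s ≤ (a + t) ^ (p - 2) * t * (θ⁻¹ * t) :=
                  mul_le_mul_of_nonneg_left hstθ hGt
              _ = θ⁻¹ * ((a + t) ^ (p - 2) * t * t) := by ring
              _ ≤ θ ^ (-q) * ((a + t) ^ (p - 2) * t * t) :=
                  mul_le_mul_of_nonneg_right hθinv (by positivity)
          nlinarith [mul_nonneg hGs hs, mul_nonneg hGt ht]
  -- Assemble using the lower bound for phiShift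
  have lbs := phiShift_lower hp1 ha hs
  have lbt := phiShift_lower hp1 ha ht
  have hφs : 0 ≤ phiShift p a s := by
    unfold phiShift
    apply intervalIntegral.integral_nonneg hs
    intro u hu
    have hu0 : 0 ≤ u := hu.1
    positivity
  have hφt : 0 ≤ phiShift p a t := by
    unfold phiShift
    apply intervalIntegral.integral_nonneg ht
    intro u hu
    have hu0 : 0 ≤ u := hu.1
    positivity
  have e1 : 2 * θ ^ r * ((a + s) ^ (p - 2) * s * s) ≤ δ * phiShift p a s := by
    have hss : (a + s) ^ (p - 2) * s * s = (a + s) ^ (p - 2) * s ^ 2 := by ring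
    rw [hss]
    have step : 2 * θ ^ r * ((a + s) ^ (p - 2) * s ^ 2) ≤ 2 * θ ^ r * (K * phiShift p a s) :=
      mul_le_mul_of_nonneg_left lbs (by positivity)
    have hcoef : 2 * θ ^ r * K ≤ δ := by
      rw [le_div_iff₀ (by positivity : (0:ℝ) < 2 * K)] at hθr
      nlinarith
    calc 2 * θ ^ r * ((a + s) ^ (p - 2) * s ^ 2) ≤ 2 * θ ^ r * K * phiShift p a s := by
          linarith [step]
      _ ≤ δ * phiShift p a s := mul_le_mul_of_nonneg_right hcoef hφs
  have e2 : 2 * θ ^ (-q) * ((a + t) ^ (p - 2) * t * t) ≤ (2 * θ ^ (-q) * K) * phiShift p a t := by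
    have htt : (a + t) ^ (p - 2) * t * t = (a + t) ^ (p - 2) * t ^ 2 := by ring
    rw [htt]
    have step : 2 * θ ^ (-q) * ((a + t) ^ (p - 2) * t ^ 2) ≤ 2 * θ ^ (-q) * (K * phiShift p a t) :=
      mul_le_mul_of_nonneg_left lbt (by positivity)
    linarith [step]
  linarith [core, e1, e2]
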